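/- Let h ∈ (0,1), k ≥ 1, ε > 0, d' > 0, K > 0. Let M ⊂ B(0,K) be a compact set and P a Borel probability measure with P(M) = 1 such that P(B̄(p,r)) ≥ min(C(P)·r^{d'}, 1) for every p ∈ M and every r > 0, for some constant C(P) > 0. Let Q be a Borel probability measure on ℝ^d with finite second moment, let d_{Q,h,k,ε} be an ε-approximate k-PDTM of Q, set Δ_P² := ∫d_{Q,h,k,ε}²(u) dP(u), and let d_M(x) := inf_{p∈M}‖x − p‖. Then sup_{x ∈ ℝ^d}|d_{Q,h,k,ε}(x) − d_M(x)| ≤ 2·C(P)^{−1/(d'+2)}·Δ_P^{2/(d'+2)} + 2·Δ_P + W₂(P,Q)·h^{−1/2}. -/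

import Mathlib

open MeasureTheory ENNReal Set Metric

noncomputable section

/-- `d`-dimensional Euclidean space. -/
abbrev Ed (d : ℕ) : Type := EuclideanSpace ℝ (Fin d)

variable {d : ℕ}

/-- A Borel probability measure is sub-Gaussian with variance `V²` if
`Q {‖x‖ > t} ≤ exp (−t²/(2V²))` for all `t > V`. -/
def IsSubG (Q : Measure (Ed d)) (V : ℝ) : Prop :=
  ∀ t : ℝ, V < t → Q {x : Ed d | t < ‖x‖} ≤ ENNReal.ofReal (Real.exp (-(t ^ 2) / (2 * V ^ 2)))

/-- `δ_{P,l}(x) = inf {r > 0 | P (B̄(x,r)) > l}`. -/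
def dtmRadius (P : Measure (Ed d)) (l : ℝ) (x : Ed d) : ℝ :=
  sInf {r : ℝ | 0 < r ∧ ENNReal.ofReal l < P (closedBall x r)}

/-- The distance to the measure `P` with mass parameter `h`. -/
def dtm (P : Measure (Ed d)) (h : ℝ) (x : Ed d) : ℝ :=
  Real.sqrt ((1 / h) * ∫ l in (0:ℝ)..h, (dtmRadius P l x) ^ 2)

/-- `c_{P,h}(v) = sup {c | P {y | ⟨y,v⟩ > c} > h}`. -/
def cInf (P : Measure (Ed d)) (h : ℝ) (v : Ed d) : ℝ :=
  sSup {c : ℝ | ENNReal.ofReal h < P {y : Ed d | c < (inner ℝ y v : ℝ)}}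

/-- `𝒫_{x,h}(P)`: probability measures `(1/h)·Q` with `Q` a sub-measure of `P` of total mass `h`,
coinciding with `P` on the open ball `B(x, δ_{P,h}(x))` and supported on the closed ball. -/
def PlocPt (P : Measure (Ed d)) (h : ℝ) (x : Ed d) : Set (Measure (Ed d)) :=
  {μ | ∃ Q : Measure (Ed d),
    μ = (ENNReal.ofReal h)⁻¹ • Q ∧ Q ≤ P ∧ Q Set.univ = ENNReal.ofReal h ∧
    (∀ A : Set (Ed d), A ⊆ ball x (dtmRadius P h x) → Q A = P A) ∧
    Q ((closedBall x (dtmRadius P h x))ᶜ) = 0}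

/-- `𝒫_{v∞,h}(P)`: probability measures `(1/h)·Q` with `Q` a sub-measure of `P` of total mass `h`,
coinciding with `P` on the open half-space `H(v, c_{P,h}(v))` and giving no mass to
`{y | ⟨y,v⟩ < c_{P,h}(v)}`. -/
def PlocInf (P : Measure (Ed d)) (h : ℝ) (v : Ed d) : Set (Measure (Ed d)) :=
  {μ | ∃ Q : Measure (Ed d),
    μ = (ENNReal.ofReal h)⁻¹ • Q ∧ Q ≤ P ∧ Q Set.univ = ENNReal.ofReal h ∧
    (∀ A : Set (Ed d), A ⊆ {y : Ed d | cInf P h v < (inner ℝ y v : ℝ)} → Q A = P A) ∧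
    Q {y : Ed d | (inner ℝ y v : ℝ) < cInf P h v} = 0}

/-- Mean of a measure. -/
def mMean (μ : Measure (Ed d)) : Ed d := ∫ u, u ∂μ

/-- Variance of a measure. -/
def mVar (μ : Measure (Ed d)) : ℝ := ∫ u, ‖u - mMean μ‖ ^ 2 ∂μ

/-- The set `M_h(P)` of all means of localized sub-measures of `P`. -/
def Mset (P : Measure (Ed d)) (h : ℝ) : Set (Ed d) :=
  {m | (∃ x : Ed d, ∃ μ ∈ PlocPt P h x, m = mMean μ) ∨
       (∃ v : Ed d, ‖v‖ = 1 ∧ ∃ μ ∈ PlocInf P h v, m = mMean μ)}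

/-- A center is either a point of `ℝ^d` or a point at infinity `v∞` for a unit vector `v`. -/
def ExtPt (d : ℕ) : Type := Ed d ⊕ {v : Ed d // ‖v‖ = 1}

/-- Localized measures at an extended point. -/
def PlocExt (P : Measure (Ed d)) (h : ℝ) : ExtPt d → Set (Measure (Ed d))
  | Sum.inl x => PlocPt P h x
  | Sum.inr v => PlocInf P h v.1

/-- A `k`-center for `P`: centers `t i` with localized measures `μ i ∈ 𝒫_{t i,h}(P)`. -/
def IsKCenter (P : Measure (Ed d)) (h : ℝ) (k : ℕ)
    (t : Fin k → ExtPt d) (μ : Fin k → Measure (Ed d)) : Prop :=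
  ∀ i, μ i ∈ PlocExt P h (t i)

/-- The risk of a `k`-center. -/
def risk (P : Measure (Ed d)) (k : ℕ) (μ : Fin k → Measure (Ed d)) : ℝ :=
  ∫ u, (⨅ i : Fin k, (‖u - mMean (μ i)‖ ^ 2 + mVar (μ i))) ∂P

/-- `f` is a `k`-PDTM of `P`: the square root of the power function of a risk-minimizing
`k`-center. -/
def IsKPDTM (P : Measure (Ed d)) (h : ℝ) (k : ℕ) (f : Ed d → ℝ) : Prop :=
  ∃ (t : Fin k → ExtPt d) (μ : Fin k → Measure (Ed d)),
    IsKCenter P h k t μ ∧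
    (∀ (t' : Fin k → ExtPt d) (μ' : Fin k → Measure (Ed d)),
      IsKCenter P h k t' μ' → risk P k μ ≤ risk P k μ') ∧
    ∀ x, f x = Real.sqrt (⨅ i : Fin k, (‖x - mMean (μ i)‖ ^ 2 + mVar (μ i)))

/-- `f` is an `ε`-approximate `k`-PDTM of `P`. -/
def IsEpsKPDTM (P : Measure (Ed d)) (h : ℝ) (k : ℕ) (ε : ℝ) (f : Ed d → ℝ) : Prop :=
  ∃ (t : Fin k → ExtPt d) (μ : Fin k → Measure (Ed d)),
    IsKCenter P h k t μ ∧
    (∀ (t' : Fin k → ExtPt d) (μ' : Fin k → Measure (Ed d)),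
      IsKCenter P h k t' μ' → risk P k μ ≤ risk P k μ' + ε) ∧
    ∀ x, f x = Real.sqrt (⨅ i : Fin k, (‖x - mMean (μ i)‖ ^ 2 + mVar (μ i)))

/-- `ω²_{P,h}(θ) = sup_x (d_{P,h}²(x) − ‖x−θ‖²)`, as an extended nonnegative real. -/
def omega2 (P : Measure (Ed d)) (h : ℝ) (θ : Ed d) : ℝ≥0∞ :=
  ⨆ x : Ed d, ENNReal.ofReal ((dtm P h x) ^ 2 - ‖x - θ‖ ^ 2)

/-- When `P` puts no mass on spheres, the unique element of `𝒫_{x,h}(P)`. -/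
def locMeasure (P : Measure (Ed d)) (h : ℝ) (x : Ed d) : Measure (Ed d) :=
  (ENNReal.ofReal h)⁻¹ • P.restrict (ball x (dtmRadius P h x))

/-- The `Lᵖ`-Wasserstein distance. -/
def Wdist (p : ℝ) (P Q : Measure (Ed d)) : ℝ :=
  sInf {w | ∃ π : Measure (Ed d × Ed d),
    π.map Prod.fst = P ∧ π.map Prod.snd = Q ∧
    w = (∫ y, ‖y.1 - y.2‖ ^ p ∂π) ^ (1 / p)}

/-- The support of a measure. -/
def msupport (P : Measure (Ed d)) : Set (Ed d) :=
  {x : Ed d | ∀ r : ℝ, 0 < r → 0 < P (ball x r)}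

end


private lemma aux_sqrt_add {b c o : ℝ} (hb : 0 ≤ b) (hc : 0 ≤ c) (ho : 0 ≤ o) :
    Real.sqrt ((b + c) ^ 2 + o) ≤ Real.sqrt (b ^ 2 + o) + c := by
  have h1 : b ≤ Real.sqrt (b ^ 2 + o) :=
    (Real.le_sqrt hb (by positivity)).2 (by linarith)
  have h2 : Real.sqrt (b ^ 2 + o) ^ 2 = b ^ 2 + o := Real.sq_sqrt (by positivity)
  have h3 : (b + c) ^ 2 + o ≤ (Real.sqrt (b ^ 2 + o) + c) ^ 2 := by nlinarith
  calc Real.sqrt ((b + c) ^ 2 + o) ≤ Real.sqrt ((Real.sqrt (b ^ 2 + o) + c) ^ 2) :=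
        Real.sqrt_le_sqrt h3
    _ = Real.sqrt (b ^ 2 + o) + c := Real.sqrt_sq (by positivity)

private lemma integrable_of_lint {α : Type*} [MeasurableSpace α] {μ : Measure α} {g : α → ℝ}
    (hm : AEStronglyMeasurable g μ) (h0 : 0 ≤ᶠ[ae μ] g)
    (hfin : ∫⁻ a, ENNReal.ofReal (g a) ∂μ < ⊤) : Integrable g μ :=
  ⟨hm, (hasFiniteIntegral_iff_ofReal h0).2 hfin⟩

private lemma cs_integral {α : Type*} [MeasurableSpace α] {μ : Measure α}
    [IsProbabilityMeasure μ] {g : α → ℝ} (hg0 : ∀ a, 0 ≤ g a)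
    (hg : Integrable g μ) (hg2 : Integrable (fun a => g a ^ 2) μ) :
    ∫ a, g a ∂μ ≤ Real.sqrt (∫ a, g a ^ 2 ∂μ) := by
  set cc := ∫ a, g a ∂μ with hcc
  have hc0 : 0 ≤ cc := integral_nonneg hg0
  have hI : Integrable (fun a => g a ^ 2 - 2 * cc * g a) μ := hg2.sub (hg.const_mul _)
  have hexp : (0:ℝ) ≤ ∫ a, g a ^ 2 ∂μ - cc ^ 2 := by
    have h1 : (0:ℝ) ≤ ∫ a, (g a - cc) ^ 2 ∂μ := integral_nonneg fun a => sq_nonneg _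
    have h2 : ∫ a, (g a - cc) ^ 2 ∂μ = ∫ a, g a ^ 2 ∂μ - cc ^ 2 := by
      have h3 : ∀ a, (g a - cc) ^ 2 = (g a ^ 2 - 2 * cc * g a) + cc ^ 2 := by intro a; ring
      simp_rw [h3]
      rw [integral_add hI (integrable_const _), integral_sub hg2 (hg.const_mul _),
        MeasureTheory.integral_const_mul, integral_const]
      simp [← hcc]
      ring
    linarith [h2 ▸ h1]
  exact (Real.le_sqrt hc0 (by nlinarith)).2 (by linarith)

set_option maxRecDepth 4000 in
private lemma mean_var_identity {d : ℕ} (μ : Measure (Ed d)) [IsProbabilityMeasure μ]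
    (h2 : Integrable (fun u : Ed d => ‖u‖ ^ 2) μ) (x : Ed d) :
    ∫ u, ‖x - u‖ ^ 2 ∂μ = ‖x - mMean μ‖ ^ 2 + mVar μ := by
  have hid : Integrable (fun u : Ed d => u) μ := by
    refine Integrable.mono' (g := fun u : Ed d => 1 + ‖u‖ ^ 2)
      ((integrable_const 1).add h2) aestronglyMeasurable_id ?_
    filter_upwards with u
    have h1 : ‖u‖ ≤ 1 + ‖u‖ ^ 2 := by nlinarith [norm_nonneg u, sq_nonneg (‖u‖ - 1)]
    simpa using h1
  set m : Ed d := mMean μ with hm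
  have hsub : Integrable (fun u : Ed d => u - m) μ := hid.sub (integrable_const m)
  have hzero : ∫ u, (u - m) ∂μ = 0 := by
    rw [integral_sub hid (integrable_const m), integral_const]
    simp only [probReal_univ, one_smul]
    exact sub_eq_zero.mpr rfl
  have hinn : Integrable (fun u : Ed d => (inner ℝ (x - m) (u - m) : ℝ)) μ :=
    hsub.const_inner _
  have hnsq : Integrable (fun u : Ed d => ‖u - m‖ ^ 2) μ := by
    refine Integrable.mono' (g := fun u : Ed d => 2 * ‖u‖ ^ 2 + 2 * ‖m‖ ^ 2)
      ((h2.const_mul 2).add (integrable_const _)) ?_ ?_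
    · exact (continuous_id.sub continuous_const).norm.pow 2 |>.aestronglyMeasurable
    · filter_upwards with u
      have : ‖u - m‖ ≤ ‖u‖ + ‖m‖ := norm_sub_le _ _
      have h0 : (0:ℝ) ≤ ‖u - m‖ := norm_nonneg _
      rw [Real.norm_of_nonneg (by positivity)]
      nlinarith [norm_nonneg u, norm_nonneg m, pow_le_pow_left₀ h0 this 2, sq_nonneg (‖u‖ - ‖m‖)]
  have hptw : ∀ u : Ed d, ‖x - u‖ ^ 2
      = ‖x - m‖ ^ 2 - 2 * (inner ℝ (x - m) (u - m) : ℝ) + ‖u - m‖ ^ 2 := by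
    intro u
    have : x - u = (x - m) - (u - m) := by abel
    rw [this, norm_sub_sq_real]
  calc ∫ u, ‖x - u‖ ^ 2 ∂μ
      = ∫ u, (‖x - m‖ ^ 2 - 2 * (inner ℝ (x - m) (u - m) : ℝ) + ‖u - m‖ ^ 2) ∂μ := by
        exact integral_congr_ae (Filter.Eventually.of_forall hptw)
    _ = (∫ u, (‖x - m‖ ^ 2 - 2 * (inner ℝ (x - m) (u - m) : ℝ)) ∂μ) + ∫ u, ‖u - m‖ ^ 2 ∂μ :=
        integral_add ((integrable_const _).sub (hinn.const_mul 2)) hnsq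
    _ = (∫ u, (‖x - m‖ ^ 2 : ℝ) ∂μ) - ∫ u, 2 * (inner ℝ (x - m) (u - m) : ℝ) ∂μ
          + ∫ u, ‖u - m‖ ^ 2 ∂μ := by
        rw [integral_sub (integrable_const _) (hinn.const_mul 2)]
    _ = ‖x - mMean μ‖ ^ 2 + mVar μ := by
        rw [integral_const, MeasureTheory.integral_const_mul, integral_inner hsub, hzero,
          inner_zero_right]
        rw [show mVar μ = ∫ u, ‖u - m‖ ^ 2 ∂μ from rfl]
        simp [measure_univ]
        rfl

private lemma ploc_extract {d : ℕ} {Q : Measure (Ed d)} {h : ℝ} {e : ExtPt d}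
    {μ : Measure (Ed d)} (hm : μ ∈ PlocExt Q h e) :
    ∃ Q' : Measure (Ed d), μ = (ENNReal.ofReal h)⁻¹ • Q' ∧ Q' ≤ Q ∧
      Q' Set.univ = ENNReal.ofReal h := by
  cases e with
  | inl x => obtain ⟨Q', h1, h2, h3, -, -⟩ := hm; exact ⟨Q', h1, h2, h3⟩
  | inr v => obtain ⟨Q', h1, h2, h3, -, -⟩ := hm; exact ⟨Q', h1, h2, h3⟩


set_option maxHeartbeats 1000000 in
/-- geometric inference with the `k`-PDTM: uniform closeness of an approximate
`k`-PDTM to the distance to the support. -/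
theorem stmt_14 {d : ℕ} (h : ℝ) (hh : h ∈ Set.Ioo (0:ℝ) 1) (k : ℕ) (hk : 1 ≤ k)
    (ε d' K : ℝ) (hε : 0 < ε) (hd' : 0 < d') (hK : 0 < K)
    (M : Set (Ed d)) (hMcpt : IsCompact M) (hMK : M ⊆ ball (0 : Ed d) K)
    (P : Measure (Ed d)) [IsProbabilityMeasure P] (hPM : P M = 1)
    (c : ℝ) (hc : 0 < c)
    (hstd : ∀ p ∈ M, ∀ r : ℝ, 0 < r →
      min (ENNReal.ofReal (c * r ^ d')) 1 ≤ P (closedBall p r))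
    (Q : Measure (Ed d)) [IsProbabilityMeasure Q]
    (hQ2 : ∫⁻ u, ENNReal.ofReal (‖u‖ ^ 2) ∂Q < ⊤)
    (f : Ed d → ℝ) (hf : IsEpsKPDTM Q h k ε f) :
    ∀ x : Ed d,
      |f x - Metric.infDist x M| ≤
        2 * c ^ (-(1 : ℝ) / (d' + 2)) *
          Real.sqrt (∫ u, f u ^ 2 ∂P) ^ ((2 : ℝ) / (d' + 2))
        + 2 * Real.sqrt (∫ u, f u ^ 2 ∂P)
        + Wdist 2 P Q * h ^ (-(1 : ℝ) / 2) := by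
  obtain ⟨t, μs, hcen, -, hform⟩ := hf
  haveI : Nonempty (Fin k) := ⟨⟨0, hk⟩⟩
  intro x
  set m : Fin k → Ed d := fun i => mMean (μs i) with hm
  set v : Fin k → ℝ := fun i => mVar (μs i) with hv
  have hv0 : ∀ i, 0 ≤ v i := fun i => integral_nonneg fun u => by positivity
  -- structural facts about f
  have hbdd : ∀ y : Ed d, BddBelow (Set.range fun i => ‖y - m i‖ ^ 2 + v i) := by
    intro y
    exact ⟨0, by rintro z ⟨i, rfl⟩; have := hv0 i; positivity⟩
  have hfle : ∀ (y : Ed d) (i : Fin k), f y ≤ Real.sqrt (‖y - m i‖ ^ 2 + v i) := by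
    intro y i
    rw [hform y]
    exact Real.sqrt_le_sqrt (ciInf_le (hbdd y) i)
  have hfeq : ∀ y : Ed d, ∃ i, f y = Real.sqrt (‖y - m i‖ ^ 2 + v i) ∧
      f y ^ 2 = ‖y - m i‖ ^ 2 + v i := by
    intro y
    obtain ⟨i, hi⟩ := Finite.exists_min (fun i => ‖y - m i‖ ^ 2 + v i)
    have hinf : (⨅ j, (‖y - m j‖ ^ 2 + v j)) = ‖y - m i‖ ^ 2 + v i :=
      le_antisymm (ciInf_le (hbdd y) i) (le_ciInf hi)
    have h0 : (0:ℝ) ≤ ‖y - m i‖ ^ 2 + v i := by have := hv0 i; positivity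
    refine ⟨i, by rw [hform y, hinf], ?_⟩
    rw [hform y, hinf, Real.sq_sqrt h0]
  have hf0 : ∀ y : Ed d, 0 ≤ f y := fun y => by rw [hform y]; exact Real.sqrt_nonneg _
  have hflip : ∀ y z : Ed d, f y ≤ f z + ‖y - z‖ := by
    intro y z
    obtain ⟨i, hi, -⟩ := hfeq z
    have h1 : f y ≤ Real.sqrt (‖y - m i‖ ^ 2 + v i) := hfle y i
    have h2 : ‖y - m i‖ ≤ ‖z - m i‖ + ‖y - z‖ := by
      have he : y - m i = (y - z) + (z - m i) := by abel
      rw [he]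
      calc ‖(y - z) + (z - m i)‖ ≤ ‖y - z‖ + ‖z - m i‖ := norm_add_le _ _
        _ = ‖z - m i‖ + ‖y - z‖ := by ring
    have h3 : Real.sqrt (‖y - m i‖ ^ 2 + v i)
        ≤ Real.sqrt ((‖z - m i‖ + ‖y - z‖) ^ 2 + v i) := by
      apply Real.sqrt_le_sqrt
      have := pow_le_pow_left₀ (norm_nonneg _) h2 2
      linarith
    have h4 := aux_sqrt_add (norm_nonneg (z - m i)) (norm_nonneg (y - z)) (hv0 i)
    rw [hi]
    linarith
  -- M is nonempty
  have hMne : M.Nonempty := by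
    rcases Set.eq_empty_or_nonempty M with he | hne
    · exfalso; rw [he] at hPM; simp at hPM
    · exact hne
  set D := Real.sqrt (∫ u, f u ^ 2 ∂P) with hD
  have hD0 : 0 ≤ D := Real.sqrt_nonneg _
  -- continuity of f
  have hfc : Continuous f := by
    have : LipschitzWith 1 f := by
      apply LipschitzWith.of_dist_le_mul
      intro y z
      rw [Real.dist_eq, dist_eq_norm, NNReal.coe_one, one_mul, abs_sub_le_iff]
      constructor
      · linarith [hflip y z]
      · have := hflip z y
        rw [norm_sub_rev] at this
        linarith
    exact this.continuous
  -- integrability of f² w.r.t. P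
  have hMmeas : MeasurableSet M := hMcpt.isClosed.measurableSet
  have hPMc : P Mᶜ = 0 := by
    have := measure_compl hMmeas (measure_ne_top P M)
    rw [hPM, measure_univ] at this
    simpa using this
  have haeM : ∀ᵐ u ∂P, u ∈ M := by
    rw [MeasureTheory.ae_iff]
    exact hPMc
  obtain ⟨z₀, -, hz₀⟩ := hMcpt.exists_isMaxOn hMne ((hfc.pow 2).continuousOn)
  have hIf2 : Integrable (fun u => f u ^ 2) P := by
    refine Integrable.mono' (integrable_const (f z₀ ^ 2)) ((hfc.pow 2).aestronglyMeasurable) ?_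
    filter_upwards [haeM] with u hu
    rw [Real.norm_of_nonneg (by positivity)]
    exact hz₀ hu
  have hD2 : ∫ u, f u ^ 2 ∂P = D ^ 2 :=
    (Real.sq_sqrt (integral_nonneg fun u => sq_nonneg _)).symm
  -- concentration bound on M
  have hrpow2 : ∀ r : ℝ, r ^ (2:ℝ) = r ^ 2 := by
    intro r
    rw [show (2:ℝ) = ((2:ℕ):ℝ) by norm_num, Real.rpow_natCast]
  have hT1 : 0 ≤ 2 * c ^ (-(1:ℝ) / (d' + 2)) * D ^ ((2:ℝ) / (d' + 2)) := by positivity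
  have hsupM : ∀ p ∈ M, f p ≤ 2 * c ^ (-(1:ℝ) / (d' + 2)) * D ^ ((2:ℝ) / (d' + 2)) + 2 * D := by
    intro p hp
    rcases eq_or_lt_of_le (hf0 p) with ha | ha
    · rw [← ha]; linarith
    set a := f p with haa
    set r := a / 2 with hra
    have hr : 0 < r := by positivity
    have hball : ∀ u ∈ closedBall p r, r ^ 2 ≤ f u ^ 2 := by
      intro u hu
      have h1 := hflip p u
      have h2 : ‖p - u‖ ≤ r := by
        rw [← dist_eq_norm, dist_comm]
        exact (mem_closedBall.1 hu)
      have h3 : r ≤ f u := by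
        rw [hra] at *
        linarith
      exact pow_le_pow_left₀ hr.le h3 2
    have hPr := hstd p hp r hr
    have step3 : min (c * r ^ d') 1 ≤ (P (closedBall p r)).toReal := by
      have h4 := ENNReal.toReal_mono (measure_ne_top P _) hPr
      rwa [ENNReal.toReal_min ENNReal.ofReal_ne_top ENNReal.one_ne_top,
        ENNReal.toReal_ofReal (by positivity), ENNReal.toReal_one] at h4
    have step1 : r ^ 2 * (P (closedBall p r)).toReal ≤ ∫ u in closedBall p r, f u ^ 2 ∂P := by
      have e1 : ∫ u in closedBall p r, (r ^ 2 : ℝ) ∂P = (P (closedBall p r)).toReal * r ^ 2 := by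
        rw [setIntegral_const, smul_eq_mul]
        rfl
      rw [mul_comm, ← e1]
      exact setIntegral_mono_on (integrableOn_const (measure_ne_top _ _))
        hIf2.integrableOn measurableSet_closedBall hball
    have step2 : ∫ u in closedBall p r, f u ^ 2 ∂P ≤ D ^ 2 := by
      rw [← hD2]
      exact setIntegral_le_integral hIf2 (Filter.Eventually.of_forall fun u => sq_nonneg _)
    have key : min (c * r ^ d') 1 * r ^ 2 ≤ D ^ 2 := by
      have h5 : (0:ℝ) ≤ r ^ 2 := sq_nonneg r
      calc min (c * r ^ d') 1 * r ^ 2 ≤ (P (closedBall p r)).toReal * r ^ 2 :=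
            mul_le_mul_of_nonneg_right step3 h5
        _ = r ^ 2 * (P (closedBall p r)).toReal := by ring
        _ ≤ ∫ u in closedBall p r, f u ^ 2 ∂P := step1
        _ ≤ D ^ 2 := step2
    rcases le_or_gt (c * r ^ d') 1 with hcase | hcase
    · rw [min_eq_left hcase] at key
      have hr2 : r ^ (d' + 2 : ℝ) ≤ D ^ 2 / c := by
        have e2 : r ^ (d' + 2 : ℝ) = r ^ d' * r ^ 2 := by
          rw [Real.rpow_add hr, hrpow2]
        rw [e2, le_div_iff₀ hc]
        calc r ^ d' * r ^ 2 * c = c * r ^ d' * r ^ 2 := by ring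
          _ ≤ D ^ 2 := key
      have h6 : r ≤ (D ^ 2 / c) ^ ((d' + 2 : ℝ)⁻¹) := by
        have h7 := Real.rpow_le_rpow (by positivity) hr2
          (by positivity : (0:ℝ) ≤ (d' + 2)⁻¹)
        rwa [← Real.rpow_mul hr.le, mul_inv_cancel₀ (by positivity), Real.rpow_one] at h7
      have h8 : (D ^ 2 / c) ^ ((d' + 2 : ℝ)⁻¹)
          = c ^ (-(1:ℝ) / (d' + 2)) * D ^ ((2:ℝ) / (d' + 2)) := by
        rw [Real.div_rpow (sq_nonneg D) hc.le]
        rw [show (-(1:ℝ) / (d' + 2)) = -((d' + 2 : ℝ)⁻¹) by field_simp]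
        rw [Real.rpow_neg hc.le]
        rw [div_eq_mul_inv, mul_comm]
        congr 1
        rw [← hrpow2 D, ← Real.rpow_mul hD0]
        congr 1
      rw [h8] at h6
      have : a ≤ 2 * (c ^ (-(1:ℝ) / (d' + 2)) * D ^ ((2:ℝ) / (d' + 2))) := by
        rw [hra] at h6; linarith
      linarith [mul_nonneg (by norm_num : (0:ℝ) ≤ 2) hD0]
    · rw [min_eq_right hcase.le, one_mul] at key
      have : r ≤ D := by nlinarith
      rw [hra] at this
      linarith
  -- nonnegativity of Wasserstein and of T3
  have hWnn : 0 ≤ Wdist 2 P Q := by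
    apply Real.sInf_nonneg
    rintro w ⟨π, -, -, rfl⟩
    exact Real.rpow_nonneg
      (integral_nonneg fun y => Real.rpow_nonneg (norm_nonneg _) _) _
  set s := Real.sqrt h with hsdef
  have hs0 : 0 < s := Real.sqrt_pos.2 hh.1
  have hhrpow : (h : ℝ) ^ (-(1:ℝ)/2) = s⁻¹ := by
    rw [show (-(1:ℝ)/2) = -(1/2) by ring, Real.rpow_neg hh.1.le, ← Real.sqrt_eq_rpow]
  have hT3 : 0 ≤ Wdist 2 P Q * h ^ (-(1:ℝ)/2) := by
    rw [hhrpow]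
    positivity
  -- upper side
  have hupper : f x - infDist x M
      ≤ 2 * c ^ (-(1:ℝ) / (d' + 2)) * D ^ ((2:ℝ) / (d' + 2)) + 2 * D := by
    obtain ⟨p, hpM, hpd⟩ := hMcpt.exists_infDist_eq_dist hMne x
    have h1 := hflip x p
    rw [dist_eq_norm] at hpd
    have h2 := hsupM p hpM
    rw [← hpd] at h1
    linarith
  -- lower side: the localized measure at the minimizing index
  obtain ⟨i₀, hfx, hfx2⟩ := hfeq x
  obtain ⟨Q', hQeq, hQle, hQuniv⟩ := ploc_extract (hcen i₀)
  have hofh0 : (ENNReal.ofReal h) ≠ 0 := ne_of_gt (ENNReal.ofReal_pos.2 hh.1)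
  have hofh_top : (ENNReal.ofReal h) ≠ ⊤ := ENNReal.ofReal_ne_top
  haveI hμ₀prob : IsProbabilityMeasure (μs i₀) := by
    constructor
    rw [hQeq, Measure.smul_apply, hQuniv, smul_eq_mul,
      ENNReal.inv_mul_cancel hofh0 hofh_top]
  have hμ2 : ∫⁻ u, ENNReal.ofReal (‖u‖ ^ 2) ∂(μs i₀) < ⊤ := by
    rw [hQeq, lintegral_smul_measure]
    refine ENNReal.mul_lt_top ?_ ?_
    · exact lt_top_iff_ne_top.2 (ENNReal.inv_ne_top.2 hofh0)
    · exact lt_of_le_of_lt (lintegral_mono' hQle le_rfl) hQ2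
  -- integrabilities w.r.t. μ₀ := μs i₀
  have hIu2 : Integrable (fun u : Ed d => ‖u‖ ^ 2) (μs i₀) :=
    integrable_of_lint ((continuous_norm.pow 2).aestronglyMeasurable)
      (Filter.Eventually.of_forall fun u => sq_nonneg _) hμ2
  have hJ2 : Integrable (fun u => ‖x - u‖ ^ 2) (μs i₀) := by
    refine Integrable.mono' (g := fun u : Ed d => 2 * ‖x‖ ^ 2 + 2 * ‖u‖ ^ 2)
      (by exact (integrable_const (2 * ‖x‖ ^ 2)).add (hIu2.const_mul 2))
      (((continuous_const.sub continuous_id').norm.pow 2).aestronglyMeasurable) ?_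
    filter_upwards with u
    have h1 : ‖x - u‖ ≤ ‖x‖ + ‖u‖ := norm_sub_le _ _
    rw [Real.norm_of_nonneg (by positivity)]
    nlinarith [norm_nonneg x, norm_nonneg u, pow_le_pow_left₀ (norm_nonneg (x - u)) h1 2,
      sq_nonneg (‖x‖ - ‖u‖)]
  have hJ1 : Integrable (fun u => ‖x - u‖) (μs i₀) := by
    refine Integrable.mono' (g := fun u : Ed d => 1 + ‖x - u‖ ^ 2)
      (by exact (integrable_const 1).add hJ2)
      ((continuous_const.sub continuous_id').norm.aestronglyMeasurable) ?_
    filter_upwards with u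
    rw [Real.norm_of_nonneg (norm_nonneg _)]
    nlinarith [norm_nonneg (x - u), sq_nonneg (‖x - u‖ - 1)]
  have hdMc : Continuous (fun u : Ed d => infDist u M) := continuous_infDist_pt M
  have hdM_le : ∀ u : Ed d, infDist u M ≤ ‖u‖ + K := by
    intro u
    obtain ⟨p₀, hp₀⟩ := hMne
    have h1 : infDist u M ≤ dist u p₀ := infDist_le_dist_of_mem hp₀
    have h2 : ‖p₀‖ < K := by
      have := hMK hp₀
      rwa [mem_ball, dist_zero_right] at this
    calc infDist u M ≤ dist u p₀ := h1
      _ = ‖u - p₀‖ := dist_eq_norm _ _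
      _ ≤ ‖u‖ + ‖p₀‖ := norm_sub_le _ _
      _ ≤ ‖u‖ + K := by linarith
  have hJd2 : Integrable (fun u => infDist u M ^ 2) (μs i₀) := by
    refine Integrable.mono' (g := fun u : Ed d => 2 * ‖u‖ ^ 2 + 2 * K ^ 2)
      (by exact (hIu2.const_mul 2).add (integrable_const (2 * K ^ 2)))
      ((hdMc.pow 2).aestronglyMeasurable) ?_
    filter_upwards with u
    have h1 := hdM_le u
    have h2 : (0:ℝ) ≤ infDist u M := infDist_nonneg
    rw [Real.norm_of_nonneg (by positivity)]
    nlinarith [norm_nonneg u, pow_le_pow_left₀ h2 h1 2, sq_nonneg (‖u‖ - K)]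
  have hJd1 : Integrable (fun u => infDist u M) (μs i₀) := by
    refine Integrable.mono' (g := fun u : Ed d => 1 + infDist u M ^ 2)
      (by exact (integrable_const 1).add hJd2) (hdMc.aestronglyMeasurable) ?_
    filter_upwards with u
    have h2 : (0:ℝ) ≤ infDist u M := infDist_nonneg
    rw [Real.norm_of_nonneg h2]
    nlinarith [sq_nonneg (infDist u M - 1)]
  -- identity and Cauchy–Schwarz
  have hid : ∫ u, ‖x - u‖ ^ 2 ∂(μs i₀) = ‖x - m i₀‖ ^ 2 + v i₀ :=
    mean_var_identity (μs i₀) hIu2 x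
  have hCS1 : ∫ u, ‖x - u‖ ∂(μs i₀) ≤ f x := by
    have h1 := cs_integral (fun u => norm_nonneg _) hJ1 hJ2
    rw [hid] at h1
    rw [hfx]
    exact h1
  have hstep7 : infDist x M ≤ f x + ∫ u, infDist u M ∂(μs i₀) := by
    have h1 : infDist x M = ∫ _u, infDist x M ∂(μs i₀) := by
      rw [integral_const, probReal_univ, one_smul]
    have h2 : ∫ _u, infDist x M ∂(μs i₀) ≤ ∫ u, (‖x - u‖ + infDist u M) ∂(μs i₀) := by
      refine integral_mono (integrable_const _) (hJ1.add hJd1) fun u => ?_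
      have h3 : infDist x M ≤ infDist u M + dist x u := infDist_le_infDist_add_dist
      rw [dist_eq_norm] at h3
      simp only
      linarith
    rw [integral_add hJ1 hJd1] at h2
    linarith
  -- transfer of ∫ d_M² from μ₀ to Q
  set L := ∫⁻ u, ENNReal.ofReal (infDist u M ^ 2) ∂Q with hLdef
  have hLfin : L < ⊤ := by
    have h1 : L ≤ ∫⁻ u, (2 * ENNReal.ofReal (‖u‖ ^ 2) + ENNReal.ofReal (2 * K ^ 2)) ∂Q := by
      refine lintegral_mono fun u => ?_
      have h2 := hdM_le u
      have h3 : (0:ℝ) ≤ infDist u M := infDist_nonneg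
      have h4 : infDist u M ^ 2 ≤ 2 * ‖u‖ ^ 2 + 2 * K ^ 2 := by
        nlinarith [norm_nonneg u, pow_le_pow_left₀ h3 h2 2, sq_nonneg (‖u‖ - K)]
      calc ENNReal.ofReal (infDist u M ^ 2) ≤ ENNReal.ofReal (2 * ‖u‖ ^ 2 + 2 * K ^ 2) :=
            ENNReal.ofReal_le_ofReal h4
        _ = ENNReal.ofReal (2 * ‖u‖ ^ 2) + ENNReal.ofReal (2 * K ^ 2) :=
            ENNReal.ofReal_add (by positivity) (by positivity)
        _ = 2 * ENNReal.ofReal (‖u‖ ^ 2) + ENNReal.ofReal (2 * K ^ 2) := by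
            rw [ENNReal.ofReal_mul (by norm_num : (0:ℝ) ≤ 2)]
            norm_num
    refine lt_of_le_of_lt h1 ?_
    rw [lintegral_add_right _ measurable_const, lintegral_const_mul 2
      ((measurable_norm.pow_const 2).ennreal_ofReal)]
    refine ENNReal.add_lt_top.2 ⟨ENNReal.mul_lt_top (by norm_num) hQ2, ?_⟩
    rw [lintegral_const, measure_univ, mul_one]
    exact ENNReal.ofReal_lt_top
  have hQdm2 : ∫ u, infDist u M ^ 2 ∂Q = L.toReal := by
    rw [hLdef]
    exact integral_eq_lintegral_of_nonneg_ae
      (Filter.Eventually.of_forall fun u => by positivity)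
      ((hdMc.pow 2).aestronglyMeasurable)
  have hstep5 : ∫ u, infDist u M ^ 2 ∂(μs i₀) ≤ h⁻¹ * ∫ u, infDist u M ^ 2 ∂Q := by
    have e1 : ∫ u, infDist u M ^ 2 ∂(μs i₀)
        = (∫⁻ u, ENNReal.ofReal (infDist u M ^ 2) ∂(μs i₀)).toReal :=
      integral_eq_lintegral_of_nonneg_ae
        (Filter.Eventually.of_forall fun u => by positivity)
        ((hdMc.pow 2).aestronglyMeasurable)
    have e2 : ∫⁻ u, ENNReal.ofReal (infDist u M ^ 2) ∂(μs i₀) ≤ (ENNReal.ofReal h)⁻¹ * L := by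
      rw [hQeq, lintegral_smul_measure]
      exact mul_le_mul_right (lintegral_mono' hQle le_rfl) _
    have e3 : ((ENNReal.ofReal h)⁻¹ * L).toReal = h⁻¹ * L.toReal := by
      rw [ENNReal.toReal_mul, ENNReal.toReal_inv, ENNReal.toReal_ofReal hh.1.le]
    calc ∫ u, infDist u M ^ 2 ∂(μs i₀)
        = (∫⁻ u, ENNReal.ofReal (infDist u M ^ 2) ∂(μs i₀)).toReal := e1
      _ ≤ ((ENNReal.ofReal h)⁻¹ * L).toReal := by
          refine ENNReal.toReal_mono ?_ e2
          exact ENNReal.mul_ne_top (ENNReal.inv_ne_top.2 hofh0) hLfin.ne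
      _ = h⁻¹ * L.toReal := e3
      _ = h⁻¹ * ∫ u, infDist u M ^ 2 ∂Q := by rw [hQdm2]
  have hCS2 : ∫ u, infDist u M ∂(μs i₀)
      ≤ s⁻¹ * Real.sqrt (∫ u, infDist u M ^ 2 ∂Q) := by
    have h1 := cs_integral (fun u => infDist_nonneg) hJd1 hJd2
    have h2 : Real.sqrt (∫ u, infDist u M ^ 2 ∂(μs i₀))
        ≤ Real.sqrt (h⁻¹ * ∫ u, infDist u M ^ 2 ∂Q) := Real.sqrt_le_sqrt hstep5
    have h3 : Real.sqrt (h⁻¹ * ∫ u, infDist u M ^ 2 ∂Q)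
        = s⁻¹ * Real.sqrt (∫ u, infDist u M ^ 2 ∂Q) := by
      rw [Real.sqrt_mul (inv_nonneg.2 hh.1.le) _, Real.sqrt_inv, hsdef]
    linarith
  -- the coupling bound
  have hmain : s * (infDist x M - f x) ≤ Wdist 2 P Q := by
    have hSne : ∃ w, w ∈ {w | ∃ π : Measure (Ed d × Ed d),
        π.map Prod.fst = P ∧ π.map Prod.snd = Q ∧
        w = (∫ y, ‖y.1 - y.2‖ ^ (2:ℝ) ∂π) ^ ((1:ℝ) / 2)} := by
      refine ⟨_, P.prod Q, ?_, ?_, rfl⟩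
      · rw [Measure.map_fst_prod]; simp
      · rw [Measure.map_snd_prod]; simp
    refine le_csInf ?_ ?_
    · obtain ⟨w, hw⟩ := hSne
      exact ⟨w, hw⟩
    rintro w ⟨π, hπ1, hπ2, rfl⟩
    haveI hπprob : IsProbabilityMeasure π := by
      constructor
      have e4 : π (Prod.fst ⁻¹' (Set.univ : Set (Ed d))) = P Set.univ := by
        rw [← hπ1, Measure.map_apply measurable_fst MeasurableSet.univ]
      simpa using e4
    have haefst : ∀ᵐ y ∂π, y.1 ∈ M := by
      rw [MeasureTheory.ae_iff]
      have e5 : {y : Ed d × Ed d | ¬ y.1 ∈ M} = Prod.fst ⁻¹' Mᶜ := rfl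
      rw [e5, ← Measure.map_apply measurable_fst hMmeas.compl, hπ1, hPMc]
    have hIπ0 : (0:ℝ) ≤ ∫ y, ‖y.1 - y.2‖ ^ 2 ∂π := integral_nonneg fun y => sq_nonneg _
    have hIa : Integrable (fun y : Ed d × Ed d => ‖y.1‖ ^ 2) π := by
      refine Integrable.mono' (integrable_const (K ^ 2))
        ((continuous_fst.norm.pow 2).aestronglyMeasurable) ?_
      filter_upwards [haefst] with y hy
      have h5 : ‖y.1‖ < K := by
        have := hMK hy
        rwa [mem_ball, dist_zero_right] at this
      rw [Real.norm_of_nonneg (by positivity)]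
      nlinarith [norm_nonneg y.1]
    have hlπ : ∫⁻ y, ENNReal.ofReal (‖y.2‖ ^ 2) ∂π < ⊤ := by
      have e6 : ∫⁻ y, ENNReal.ofReal (‖y.2‖ ^ 2) ∂π = ∫⁻ u, ENNReal.ofReal (‖u‖ ^ 2) ∂Q := by
        rw [← hπ2, lintegral_map ((measurable_norm.pow_const 2).ennreal_ofReal) measurable_snd]
      rw [e6]; exact hQ2
    have hIb : Integrable (fun y : Ed d × Ed d => ‖y.2‖ ^ 2) π :=
      integrable_of_lint ((continuous_snd.norm.pow 2).aestronglyMeasurable)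
        (Filter.Eventually.of_forall fun y => sq_nonneg _) hlπ
    have hIab : Integrable (fun y : Ed d × Ed d => ‖y.1 - y.2‖ ^ 2) π := by
      refine Integrable.mono' (g := fun y : Ed d × Ed d => 2 * ‖y.1‖ ^ 2 + 2 * ‖y.2‖ ^ 2)
        (by exact (hIa.const_mul 2).add (hIb.const_mul 2))
        (((continuous_fst.sub continuous_snd).norm.pow 2).aestronglyMeasurable) ?_
      filter_upwards with y
      have h6 : ‖y.1 - y.2‖ ≤ ‖y.1‖ + ‖y.2‖ := norm_sub_le _ _
      rw [Real.norm_of_nonneg (by positivity)]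
      nlinarith [norm_nonneg y.1, norm_nonneg y.2,
        pow_le_pow_left₀ (norm_nonneg (y.1 - y.2)) h6 2, sq_nonneg (‖y.1‖ - ‖y.2‖)]
    have hdd : ∫ u, infDist u M ^ 2 ∂Q ≤ ∫ y, ‖y.1 - y.2‖ ^ 2 ∂π := by
      have e7 : ∫ u, infDist u M ^ 2 ∂Q = ∫ y, infDist y.2 M ^ 2 ∂π := by
        rw [← hπ2, integral_map (f := fun u => infDist u M ^ 2) measurable_snd.aemeasurable
          ((hdMc.pow 2).aestronglyMeasurable)]
      rw [e7]
      have hptbd : ∀ᵐ y ∂π, infDist y.2 M ^ 2 ≤ ‖y.1 - y.2‖ ^ 2 := by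
        filter_upwards [haefst] with y hy
        have h7 : infDist y.2 M ≤ ‖y.1 - y.2‖ := by
          have h8 : infDist y.2 M ≤ dist y.2 y.1 := infDist_le_dist_of_mem hy
          rwa [dist_eq_norm, norm_sub_rev] at h8
        exact pow_le_pow_left₀ infDist_nonneg h7 2
      refine integral_mono_ae ?_ hIab hptbd
      refine Integrable.mono' hIab
        (((hdMc.comp continuous_snd).pow 2).aestronglyMeasurable) ?_
      filter_upwards [hptbd] with y hy
      rw [Real.norm_of_nonneg (by positivity)]
      exact hy
    -- conclusion for this coupling
    have e8 : (∫ y, ‖y.1 - y.2‖ ^ (2:ℝ) ∂π) = ∫ y, ‖y.1 - y.2‖ ^ 2 ∂π := by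
      refine integral_congr_ae (Filter.Eventually.of_forall fun y => ?_)
      exact hrpow2 _
    have e9 : (∫ y, ‖y.1 - y.2‖ ^ (2:ℝ) ∂π) ^ ((1:ℝ) / 2)
        = Real.sqrt (∫ y, ‖y.1 - y.2‖ ^ 2 ∂π) := by
      rw [e8, ← Real.sqrt_eq_rpow]
    rw [e9]
    have h9 : Real.sqrt (∫ u, infDist u M ^ 2 ∂Q)
        ≤ Real.sqrt (∫ y, ‖y.1 - y.2‖ ^ 2 ∂π) := Real.sqrt_le_sqrt hdd
    have h10 : infDist x M - f x ≤ s⁻¹ * Real.sqrt (∫ y, ‖y.1 - y.2‖ ^ 2 ∂π) := by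
      have h11 := mul_le_mul_of_nonneg_left h9 (inv_nonneg.2 hs0.le)
      linarith [hstep7, hCS2]
    have h12 := mul_le_mul_of_nonneg_left h10 hs0.le
    rw [← mul_assoc, mul_inv_cancel₀ hs0.ne', one_mul] at h12
    exact h12
  have hlower : infDist x M - f x ≤ Wdist 2 P Q * h ^ (-(1:ℝ) / 2) := by
    rw [hhrpow]
    have h13 := mul_le_mul_of_nonneg_left hmain (inv_nonneg.2 hs0.le)
    rw [← mul_assoc, inv_mul_cancel₀ hs0.ne', one_mul] at h13
    calc infDist x M - f x ≤ s⁻¹ * Wdist 2 P Q := h13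
      _ = Wdist 2 P Q * s⁻¹ := by ring
  rw [abs_sub_le_iff]
  constructor
  · linarith
  · linarith
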